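/- arXiv:1012.5196 — 3 statements merged into one kernel-verified Lean document; each statement's English description precedes it below -/
import Mathlib

section
/- A *-algebra A is a Baer *-algebra if and only if A is a Rickart *-algebra whose lattice of projections is complete. -/
section
variable {A : Type*} [Ring A] [Algebra ℂ A] [StarRing A]

/-- `e` is a projection: self-adjoint idempotent. -/
def IsProjection (e : A) : Prop := star e = e ∧ e * e = e

/-- Right annihilator of a subset. -/
def RightAnn (S : Set A) : Set A := {x : A | ∀ s ∈ S, s * x = 0}

/-- Baer *-algebra. -/
def IsBaerStar (A : Type*) [Ring A] [Algebra ℂ A] [StarRing A] : Prop :=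
  ∀ S : Set A, S.Nonempty → ∃ e : A, IsProjection e ∧
    RightAnn S = {x : A | ∃ a : A, x = e * a}

/-- Rickart *-algebra. -/
def IsRickartStar (A : Type*) [Ring A] [Algebra ℂ A] [StarRing A] : Prop :=
  ∀ x : A, ∃ e : A, IsProjection e ∧
    RightAnn {x} = {y : A | ∃ a : A, y = e * a}

/-- `s` is the supremum of the set of projections `Q` in the order e ≤ f iff e = ef. -/
def IsProjSup (Q : Set A) (s : A) : Prop :=
  IsProjection s ∧ (∀ e ∈ Q, e = e * s) ∧
    ∀ t : A, IsProjection t → (∀ e ∈ Q, e = e * t) → s = s * t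

/-- `i` is the infimum of the set of projections `Q`. -/
def IsProjInf (Q : Set A) (i : A) : Prop :=
  IsProjection i ∧ (∀ e ∈ Q, i = i * e) ∧
    ∀ t : A, IsProjection t → (∀ e ∈ Q, t = t * e) → t = t * i

end

section Aux
variable {A : Type*} [Ring A] [Algebra ℂ A] [StarRing A]

lemma isProjection_one : IsProjection (1 : A) := ⟨star_one A, one_mul 1⟩

lemma isProjection_compl {e : A} (he : IsProjection e) : IsProjection (1 - e) := by
  refine ⟨by rw [star_sub, star_one, he.1], ?_⟩
  have h : (1 - e) * (1 - e) = 1 - e - e + e * e := by noncomm_ring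
  rw [h, he.2]; abel

/-- Taking stars of a product equation between self-adjoint elements. -/
lemma star_flip {f g h : A} (hf : star f = f) (hg : star g = g) (hh : star h = h)
    (heq : f * g = h) : g * f = h := by
  have := congrArg star heq
  rwa [star_mul, hf, hg, hh] at this

lemma baer_inf (hB : IsBaerStar A) (Q : Set A) (hQ : ∀ e ∈ Q, IsProjection e) :
    ∃ i : A, IsProjInf Q i := by
  rcases Q.eq_empty_or_nonempty with rfl | ⟨e0, he0⟩
  · exact ⟨1, isProjection_one, by simp, fun t _ _ => (mul_one t).symm⟩
  obtain ⟨g, hg, hgR⟩ := hB ((fun e => 1 - e) '' Q) ⟨1 - e0, e0, he0, rfl⟩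
  have hgmem : g ∈ RightAnn ((fun e => 1 - e) '' Q) := by
    rw [hgR]; exact ⟨g, hg.2.symm⟩
  refine ⟨g, hg, ?_, ?_⟩
  · intro e he
    have h1 : (1 - e) * g = 0 := hgmem _ ⟨e, he, rfl⟩
    have h2 : e * g = g := by
      have h3 : g - e * g = 0 := by rw [sub_mul, one_mul] at h1; exact h1
      exact (sub_eq_zero.mp h3).symm
    exact (star_flip (hQ e he).1 hg.1 hg.1 h2).symm
  · intro t ht hte
    have htmem : t ∈ RightAnn ((fun e => 1 - e) '' Q) := by
      rintro _ ⟨e, he, rfl⟩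
      have h1 : e * t = t := star_flip ht.1 (hQ e he).1 ht.1 (hte e he).symm
      rw [sub_mul, one_mul, h1, sub_self]
    rw [hgR] at htmem
    obtain ⟨a, hta⟩ := htmem
    have h2 : g * t = t := by rw [hta, ← mul_assoc, hg.2]
    exact (star_flip hg.1 ht.1 ht.1 h2).symm

lemma baer_sup (hB : IsBaerStar A) (Q : Set A) (hQ : ∀ e ∈ Q, IsProjection e) :
    ∃ s : A, IsProjSup Q s := by
  obtain ⟨i, hi⟩ := baer_inf hB ((fun e => 1 - e) '' Q)
    (by rintro _ ⟨e, he, rfl⟩; exact isProjection_compl (hQ e he))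
  refine ⟨1 - i, isProjection_compl hi.1, ?_, ?_⟩
  · intro e he
    have h1 : i = i * (1 - e) := hi.2.1 _ ⟨e, he, rfl⟩
    have h2 : i * e = 0 := by
      rw [mul_sub, mul_one] at h1
      have h3 : i - (i - i * e) = 0 := sub_eq_zero.mpr h1
      have h4 : i - (i - i * e) = i * e := by abel
      rw [← h4, h3]
    have h4 : e * i = 0 := star_flip hi.1.1 (hQ e he).1 (star_zero A) h2
    rw [mul_sub, mul_one, h4, sub_zero]
  · intro t ht hte
    have h1 : 1 - t = (1 - t) * i := by
      refine hi.2.2 (1 - t) (isProjection_compl ht) ?_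
      rintro _ ⟨e, he, rfl⟩
      have h2 : t * e = e := star_flip (hQ e he).1 ht.1 (hQ e he).1 (hte e he).symm
      have : (1 - t) * (1 - e) = 1 - e - t + t * e := by noncomm_ring
      rw [this, h2]; abel
    -- from 1 - t = i - t * i, get t * (1 - i) = 1 - i
    have h3 : t * (1 - i) = 1 - i := by
      have h4 : 1 - t = i - t * i := by rw [h1]; noncomm_ring
      have h5 : t - t * i - (1 - i) = -((1 - t) - (i - t * i)) := by abel
      rw [sub_eq_zero.mpr h4, neg_zero] at h5
      have h6 : t * (1 - i) = t - t * i := by noncomm_ring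
      rw [h6]; exact sub_eq_zero.mp h5
    exact (star_flip ht.1 (isProjection_compl hi.1).1 (isProjection_compl hi.1).1 h3).symm

end Aux

/-- A is Baer iff A is Rickart with complete projection lattice. -/
theorem baer_iff_rickart_and_complete_projection_lattice
    (A : Type*) [Ring A] [Algebra ℂ A] [StarRing A] :
    IsBaerStar A ↔
      (IsRickartStar A ∧
        ∀ Q : Set A, (∀ e ∈ Q, IsProjection e) →
          (∃ s : A, IsProjSup Q s) ∧ (∃ i : A, IsProjInf Q i)) := by
  constructor
  · intro hB
    refine ⟨fun x => hB {x} ⟨x, rfl⟩, fun Q hQ => ⟨baer_sup hB Q hQ, baer_inf hB Q hQ⟩⟩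
  · rintro ⟨hR, hC⟩ S hS
    choose ep hep1 hep2 using hR
    obtain ⟨-, ⟨i, hi⟩⟩ := hC (ep '' S) (by rintro _ ⟨s, hs, rfl⟩; exact hep1 s)
    refine ⟨i, hi.1, ?_⟩
    ext x
    simp only [RightAnn, Set.mem_setOf_eq]
    constructor
    · intro hx
      -- left projection of x via Rickart applied to star x
      set h : A := ep (star x) with hdef
      have hh : IsProjection h := hep1 (star x)
      have hhR : RightAnn {star x} = {y : A | ∃ a : A, y = h * a} := hep2 (star x)
      have hxh : star x * h = 0 := by
        have : h ∈ RightAnn {star x} := by rw [hhR]; exact ⟨h, hh.2.symm⟩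
        exact this _ rfl
      have hhx : h * x = 0 := by
        have := congrArg star hxh
        rwa [star_mul, star_star, hh.1, star_zero] at this
      set f : A := 1 - h with hf
      have hfx : f * x = x := by rw [hf, sub_mul, one_mul, hhx, sub_zero]
      have hfproj : IsProjection f := isProjection_compl hh
      -- f ≤ ep s for each s ∈ S
      have hfle : ∀ e' ∈ ep '' S, f = f * e' := by
        rintro _ ⟨s, hs, rfl⟩
        have hex : ep s * x = x := by
          have hxm : x ∈ RightAnn {s} := by intro s' hs'; rw [Set.mem_singleton_iff.mp hs']; exact hx s hs
          rw [hep2 s] at hxm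
          obtain ⟨a, rfl⟩ := hxm
          rw [← mul_assoc, (hep1 s).2]
        have h1 : (1 - ep s) * x = 0 := by rw [sub_mul, one_mul, hex, sub_self]
        have h2 : star x * (1 - ep s) = 0 := by
          have := congrArg star h1
          rwa [star_mul, star_sub, star_one, (hep1 s).1, star_zero] at this
        have h3 : (1 - ep s) ∈ RightAnn {star x} := by
          intro s' hs'; rw [Set.mem_singleton_iff.mp hs']; exact h2
        rw [hhR] at h3
        obtain ⟨a, ha⟩ := h3
        have h4 : h * (1 - ep s) = 1 - ep s := by rw [ha, ← mul_assoc, hh.2]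
        have h5 : f * (1 - ep s) = 0 := by rw [hf, sub_mul, one_mul, h4, sub_self]
        have h6 : f * (1 - ep s) = f - f * ep s := by noncomm_ring
        rw [h6] at h5
        exact (sub_eq_zero.mp h5)
      have hfi : f = f * i := hi.2.2 f hfproj hfle
      have hif : i * f = f := star_flip hfproj.1 hi.1.1 hfproj.1 hfi.symm
      exact ⟨x, by rw [← hfx, ← mul_assoc, hif]⟩
    · rintro ⟨a, rfl⟩ s hs
      have h1 : i = i * ep s := hi.2.1 _ ⟨s, hs, rfl⟩
      have h2 : ep s * i = i := star_flip hi.1.1 (hep1 s).1 hi.1.1 h1.symm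
      have h3 : s * ep s = 0 := by
        have : ep s ∈ RightAnn {s} := by rw [hep2 s]; exact ⟨ep s, (hep1 s).2.symm⟩
        exact this _ rfl
      rw [← h2, ← mul_assoc, ← mul_assoc, h3, zero_mul, zero_mul]
end

section
/- If A is a Rickart *-algebra in which every family of pairwise orthogonal projections has a supremum in the projection lattice, then A is a Baer *-algebra. -/
/-- Rickart + sups of orthogonal families of projections ⟹ Baer. -/
theorem rickart_orthogonal_sups_implies_baer
    (A : Type*) [Ring A] [Algebra ℂ A] [StarRing A]
    (hR : IsRickartStar A)
    (hsup : ∀ Q : Set A, (∀ e ∈ Q, IsProjection e) →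
      (∀ e ∈ Q, ∀ f ∈ Q, e ≠ f → e * f = 0) → ∃ s : A, IsProjSup Q s) :
    IsBaerStar A := by
  intro S _
  -- collection of orthogonal families of nonzero projections in R(S)
  set Pfam : Set (Set A) := {Q | (∀ e ∈ Q, IsProjection e ∧ e ≠ 0 ∧ ∀ s ∈ S, s * e = 0) ∧
    (∀ e ∈ Q, ∀ f ∈ Q, e ≠ f → e * f = 0)} with hPfam
  obtain ⟨Q, hQmax⟩ := zorn_subset Pfam (by
    intro c hc hchain
    refine ⟨⋃₀ c, ⟨?_, ?_⟩, fun s hs => Set.subset_sUnion_of_mem hs⟩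
    · rintro e ⟨q, hq, he⟩
      exact (hc hq).1 e he
    · rintro e ⟨q, hq, he⟩ f ⟨q', hq', hf⟩ hef
      rcases hchain.total hq hq' with h | h
      · exact (hc hq').2 e (h he) f hf hef
      · exact (hc hq).2 e he f (h hf) hef)
  have hQ := hQmax.prop
  obtain ⟨g, ⟨hgs, hgm⟩, hgub, hglub⟩ := hsup Q (fun e he => (hQ.1 e he).1) hQ.2
  -- g annihilates S
  have hgann : ∀ s ∈ S, s * g = 0 := by
    intro s hs
    obtain ⟨e, ⟨hes, hem⟩, hre⟩ := hR s
    have hse : s * e = 0 := by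
      have : e ∈ RightAnn {s} := by rw [hre]; exact ⟨e, by rw [hem]⟩
      exact this s rfl
    have hge : g = g * e := by
      apply hglub e ⟨hes, hem⟩
      intro q hq
      have : q ∈ RightAnn {s} := fun t ht => by
        rw [Set.mem_singleton_iff] at ht; rw [ht]; exact (hQ.1 q hq).2.2 s hs
      rw [hre] at this
      obtain ⟨a, ha⟩ := this
      have h1 : e * q = q := by rw [ha, ← mul_assoc, hem]
      calc q = star q := ((hQ.1 q hq).1).1.symm
        _ = star (e * q) := by rw [h1]
        _ = star q * star e := by rw [star_mul]
        _ = q * e := by rw [(hQ.1 q hq).1.1, hes]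
    have hge' : g = e * g := by
      calc g = star g := hgs.symm
        _ = star (g * e) := by rw [← hge]
        _ = star e * star g := by rw [star_mul]
        _ = e * g := by rw [hes, hgs]
    rw [hge', ← mul_assoc, hse, zero_mul]
  refine ⟨g, ⟨hgs, hgm⟩, ?_⟩
  ext x
  constructor
  · intro hx
    set y : A := x - g * x with hy
    have hyann : ∀ s ∈ S, s * y = 0 := by
      intro s hs
      rw [hy, mul_sub, hx s hs, ← mul_assoc, hgann s hs, zero_mul, sub_zero]
    have hgy : g * y = 0 := by
      rw [hy, mul_sub, ← mul_assoc, hgm, sub_self]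
    have hy0 : y = 0 := by
      by_contra hy0
      obtain ⟨f, ⟨hfs, hfm⟩, hrf⟩ := hR (star y)
      set e : A := 1 - f with he
      have hep : IsProjection e := by
        constructor
        · rw [he, star_sub, star_one, hfs]
        · rw [he, sub_mul, one_mul, mul_sub, mul_one, hfm]; abel
      have hyf : star y * f = 0 := by
        have : f ∈ RightAnn {star y} := by rw [hrf]; exact ⟨f, by rw [hfm]⟩
        exact this _ rfl
      have hey : e * y = y := by
        have h1 : star y * e = star y := by
          rw [he, mul_sub, mul_one, hyf, sub_zero]
        calc e * y = star e * star (star y) := by rw [hep.1, star_star]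
          _ = star (star y * e) := by rw [star_mul]
          _ = star (star y) := by rw [h1]
          _ = y := star_star y
      have he0 : e ≠ 0 := fun h => hy0 (by rw [← hey, h, zero_mul])
      -- e annihilated by S
      have heann : ∀ s ∈ S, s * e = 0 := by
        intro s hs
        have : star s ∈ RightAnn {star y} := by
          intro t ht; rw [Set.mem_singleton_iff] at ht; rw [ht]
          calc star y * star s = star (s * y) := (star_mul s y).symm
            _ = 0 := by rw [hyann s hs, star_zero]
        rw [hrf] at this
        obtain ⟨a, ha⟩ := this
        have h1 : e * star s = 0 := by
          rw [ha, he, sub_mul, one_mul, ← mul_assoc, hfm]; exact sub_self _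
        calc s * e = star (star e * star s) := by rw [← star_mul, star_star]
          _ = star (e * star s) := by rw [hep.1]
          _ = 0 := by rw [h1, star_zero]
      -- e orthogonal to g
      have heg : e * g = 0 := by
        have : g ∈ RightAnn {star y} := by
          intro t ht; rw [Set.mem_singleton_iff] at ht; rw [ht]
          calc star y * g = star y * star g := by rw [hgs]
            _ = star (g * y) := (star_mul g y).symm
            _ = 0 := by rw [hgy, star_zero]
        rw [hrf] at this
        obtain ⟨a, ha⟩ := this
        rw [ha, he, sub_mul, one_mul, ← mul_assoc, hfm]; exact sub_self _
      have hge0 : g * e = 0 := by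
        calc g * e = star (star e * star g) := by rw [← star_mul, star_star]
          _ = star (e * g) := by rw [hep.1, hgs]
          _ = 0 := by rw [heg, star_zero]
      -- e orthogonal to every q ∈ Q
      have hqe : ∀ q ∈ Q, q * e = 0 := by
        intro q hq
        rw [hgub q hq, mul_assoc, hge0, mul_zero]
      have heq : ∀ q ∈ Q, e * q = 0 := by
        intro q hq
        calc e * q = star (star q * star e) := by rw [← star_mul, star_star]
          _ = star (q * e) := by rw [hep.1, (hQ.1 q hq).1.1]
          _ = 0 := by rw [hqe q hq, star_zero]
      -- Q ∪ {e} contradicts maximality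
      have hmem : insert e Q ∈ Pfam := by
        constructor
        · rintro x (rfl | hx)
          · exact ⟨hep, he0, heann⟩
          · exact hQ.1 x hx
        · rintro x (rfl | hx) z (rfl | hz) hxz
          · exact absurd rfl hxz
          · exact heq z hz
          · exact hqe x hx
          · exact hQ.2 x hx z hz hxz
      have heQ : e ∈ Q := hQmax.2 hmem (Set.subset_insert e Q) (Set.mem_insert e Q)
      have : e = 0 := by rw [← hgub e heQ] at heg; exact heg.symm ▸ heg
      exact he0 this
    exact ⟨x, sub_eq_zero.mp hy0⟩
  · rintro ⟨a, rfl⟩ s hs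
    rw [← mul_assoc, hgann s hs, zero_mul]
end

section
/- In a Baer *-ring, if e_λ (λ ∈ Γ) is a family of projections with supremum e, and x is an element commuting with every e_λ (x e_λ = e_λ x for all λ), then x commutes with e: xe = ex. -/
/-- in a Baer *-ring, an element commuting with each projection of a
family commutes with their supremum. -/
theorem commutes_with_sup_of_family
    {A : Type*} [Ring A] [StarRing A]
    (hBaer : ∀ S : Set A, S.Nonempty → ∃ g : A,
      (star g = g ∧ g * g = g) ∧
        {y : A | ∀ s ∈ S, s * y = 0} = {y : A | ∃ a : A, y = g * a})
    {Γ : Type*} (eΛ : Γ → A)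
    (hproj : ∀ lam : Γ, star (eΛ lam) = eΛ lam ∧ eΛ lam * eΛ lam = eΛ lam)
    (e : A) (he : star e = e ∧ e * e = e)
    (hub : ∀ lam : Γ, eΛ lam = eΛ lam * e)
    (hlub : ∀ f : A, (star f = f ∧ f * f = f) → (∀ lam : Γ, eΛ lam = eΛ lam * f) →
      e = e * f)
    (x : A) (hx : ∀ lam : Γ, x * eΛ lam = eΛ lam * x) :
    x * e = e * x := by
  by_cases hΓ : Nonempty Γ
  · -- the range of eΛ is nonempty
    obtain ⟨g, ⟨hgs, hgg⟩, hann⟩ :=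
      hBaer (Set.range eΛ) (Set.range_nonempty eΛ)
    have mem_iff : ∀ y : A, (∀ lam : Γ, eΛ lam * y = 0) ↔ ∃ a : A, y = g * a := by
      intro y
      constructor
      · intro h
        have : y ∈ {y : A | ∀ s ∈ Set.range eΛ, s * y = 0} := by
          intro s hs; obtain ⟨lam, rfl⟩ := hs; exact h lam
        rw [hann] at this; exact this
      · intro h lam
        have : y ∈ {y : A | ∃ a : A, y = g * a} := h
        rw [← hann] at this
        exact this (eΛ lam) ⟨lam, rfl⟩
    have hEg : ∀ lam : Γ, eΛ lam * g = 0 := (mem_iff g).2 ⟨1, by rw [mul_one]⟩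
    -- 1 - g is a projection and an upper bound
    have hfproj : star (1 - g : A) = 1 - g ∧ (1 - g) * (1 - g) = 1 - g := by
      constructor
      · rw [star_sub, star_one, hgs]
      · have h2 : (1 - g) * (1 - g) = 1 - g - g + g * g := by noncomm_ring
        rw [h2, hgg]; abel
    have hfub : ∀ lam : Γ, eΛ lam = eΛ lam * (1 - g) := by
      intro lam
      rw [mul_sub, mul_one, hEg, sub_zero]
    have heg : e * g = 0 := by
      have h := hlub (1 - g) hfproj hfub
      rw [mul_sub, mul_one] at h
      calc e * g = e - (e - e * g) := by abel
        _ = 0 := by rw [← h, sub_self]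
    -- g = 1 - e
    obtain ⟨a, ha⟩ : ∃ a : A, (1 - e) = g * a := by
      apply (mem_iff (1 - e)).1
      intro lam
      rw [mul_sub, mul_one, ← hub lam, sub_self]
    have hg1e : g * (1 - e) = 1 - e := by
      rw [ha, ← mul_assoc, hgg]
    have hge : g = 1 - e := by
      have hstar : (1 - e) * g = 1 - e := by
        have := congrArg star hg1e
        simpa [star_sub, hgs, he.1, star_mul] using this
      rw [sub_mul, one_mul, heg, sub_zero] at hstar
      exact hstar
    -- x * g = g * x
    have hxg : x * g = g * x * g := by
      obtain ⟨c, hc⟩ : ∃ c : A, x * g = g * c := by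
        apply (mem_iff (x * g)).1
        intro lam
        rw [← mul_assoc, ← hx lam, mul_assoc, hEg, mul_zero]
      have h2 : g * (x * g) = x * g := by rw [hc, ← mul_assoc, hgg, ← hc]
      rw [← mul_assoc] at h2
      exact h2.symm
    have hxsg : star x * g = g * star x * g := by
      obtain ⟨c, hc⟩ : ∃ c : A, star x * g = g * c := by
        apply (mem_iff (star x * g)).1
        intro lam
        have hcomm : eΛ lam * star x = star x * eΛ lam := by
          have := congrArg star (hx lam)
          simpa [star_mul, (hproj lam).1] using this
        rw [← mul_assoc, hcomm, mul_assoc, hEg, mul_zero]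
      have h2 : g * (star x * g) = star x * g := by rw [hc, ← mul_assoc, hgg, ← hc]
      rw [← mul_assoc] at h2
      exact h2.symm
    have hgx : g * x = g * x * g := by
      have := congrArg star hxsg
      simpa [star_mul, hgs, mul_assoc] using this
    have hcomm : x * g = g * x := by rw [hxg, ← hgx]
    -- conclude
    have : e = 1 - g := by rw [hge, sub_sub_cancel]
    rw [this, mul_sub, sub_mul, mul_one, one_mul, hcomm]
  · -- Γ empty: e = 0
    have h0 : e = e * 0 := hlub 0 ⟨star_zero A, by rw [mul_zero]⟩
      (fun lam => absurd ⟨lam⟩ hΓ)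
    rw [mul_zero] at h0
    rw [h0, mul_zero, zero_mul]
end
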